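/- The function g(t) = t/(log₂(2+t))² is concave on [0, ∞). -/

import Mathlib

noncomputable def g (t : ℝ) : ℝ := t / (Real.logb 2 (2 + t)) ^ 2

open Real Set

-- key inequality : for u ≥ 2, 3u - 6 ≤ (u+2) log u
lemma key_ineq (u : ℝ) (hu : 2 ≤ u) : 3 * u - 6 ≤ (u + 2) * Real.log u := by
  have h2 : (0.6931471803 : ℝ) < Real.log 2 := Real.log_two_gt_d9
  have hu0 : (0:ℝ) < u := by linarith
  have hb : ∀ a : ℝ, 0 < a → a ≤ u → Real.log a + 1 - a / u ≤ Real.log u := by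
    intro a ha hau
    have h := Real.log_le_sub_one_of_pos (show 0 < a / u from div_pos ha hu0)
    rw [Real.log_div (ne_of_gt ha) (ne_of_gt hu0)] at h
    linarith
  have hdiv : ∀ a : ℝ, 0 < a → a ≤ u → a / u * u = a := by
    intro a ha hau; field_simp
  rcases le_or_gt u 4 with h4 | h4
  · have hl := hb 2 (by norm_num) hu
    have hd := hdiv 2 (by norm_num) hu
    nlinarith [mul_pos hu0 hu0, sq_nonneg (u - 2), sq_nonneg (u - 4)]
  rcases le_or_gt u 8 with h8 | h8
  · have hl := hb 4 (by norm_num) (le_of_lt h4)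
    have hd := hdiv 4 (by norm_num) (le_of_lt h4)
    have h4l : Real.log 4 = 2 * Real.log 2 := by
      rw [show (4:ℝ) = 2^2 by norm_num, Real.log_pow]; ring
    rw [h4l] at hl
    nlinarith [mul_pos hu0 hu0, sq_nonneg (u - 4), sq_nonneg (u - 8)]
  rcases le_or_gt u 16 with h16 | h16
  · have hl := hb 8 (by norm_num) (le_of_lt h8)
    have hd := hdiv 8 (by norm_num) (le_of_lt h8)
    have h8l : Real.log 8 = 3 * Real.log 2 := by
      rw [show (8:ℝ) = 2^3 by norm_num, Real.log_pow]; ring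
    rw [h8l] at hl
    nlinarith [mul_pos hu0 hu0, sq_nonneg (u - 8), sq_nonneg (u - 16)]
  · have hl := hb 16 (by norm_num) (le_of_lt h16)
    have hd := hdiv 16 (by norm_num) (le_of_lt h16)
    have h16l : Real.log 16 = 4 * Real.log 2 := by
      rw [show (16:ℝ) = 2^4 by norm_num, Real.log_pow]; ring
    rw [h16l] at hl
    nlinarith [mul_pos hu0 hu0, sq_nonneg (u - 16)]

theorem stmt_2 : ConcaveOn ℝ (Set.Ici 0) g := by
  have hc : (0:ℝ) < Real.log 2 := Real.log_pos (by norm_num)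
  -- g rewritten
  have hg : g = fun x : ℝ => (Real.log 2)^2 * x / (Real.log (2 + x))^2 := by
    funext x
    simp only [g, Real.logb, div_pow]
    rw [div_div_eq_mul_div]
    ring
  set c := Real.log 2 with hcdef
  -- set up derivative functions
  set g1 : ℝ → ℝ := fun x => c^2 * ((2+x) * Real.log (2+x) - 2*x) / ((2+x) * (Real.log (2+x))^3) with hg1def
  set g2 : ℝ → ℝ := fun x => c^2 * (6*x - (2*x+8) * Real.log (2+x)) / ((2+x)^2 * (Real.log (2+x))^4) with hg2def
  have hL : ∀ x : ℝ, 0 < x → HasDerivAt (fun y : ℝ => Real.log (2+y)) (1/(2+x)) x := by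
    intro x hx
    have h1 : HasDerivAt (fun y : ℝ => 2 + y) 1 x := (hasDerivAt_id x).const_add 2
    have h2 : HasDerivAt Real.log (1/(2+x)) (2+x) := by
      have := Real.hasDerivAt_log (by linarith : (2:ℝ)+x ≠ 0)
      simpa [one_div] using this
    exact (h2.comp x h1).congr_deriv (mul_one _)
  have hLpos : ∀ x : ℝ, 0 < x → 0 < Real.log (2+x) := by
    intro x hx
    exact Real.log_pos (by linarith)
  -- first derivative
  have hd1 : ∀ x ∈ interior (Set.Ici (0:ℝ)), HasDerivAt g (g1 x) x := by
    intro x hx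
    rw [interior_Ici] at hx
    have hx : (0:ℝ) < x := hx
    have hL' := hL x hx
    have hLp := hLpos x hx
    have hx2 : (0:ℝ) < 2 + x := by linarith
    have hnum : HasDerivAt (fun y : ℝ => c^2 * y) (c^2) x := by
      simpa using (hasDerivAt_id x).const_mul (c^2)
    have hden : HasDerivAt (fun y : ℝ => (Real.log (2+y))^2) (2 * Real.log (2+x) * (1/(2+x))) x := by
      have := hL'.pow 2
      refine this.congr_deriv ?_
      norm_num
    have := hnum.div hden (by positivity)
    rw [hg]
    refine this.congr_deriv ?_
    rw [hg1def]
    field_simp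
  -- second derivative
  have hd2 : ∀ x ∈ interior (Set.Ici (0:ℝ)), HasDerivAt g1 (g2 x) x := by
    intro x hx
    rw [interior_Ici] at hx
    have hx : (0:ℝ) < x := hx
    have hL' := hL x hx
    have hLp := hLpos x hx
    have hx2 : (0:ℝ) < 2 + x := by linarith
    have haux : HasDerivAt (fun y : ℝ => 2 + y) 1 x := (hasDerivAt_id x).const_add 2
    have hnum : HasDerivAt (fun y : ℝ => c^2 * ((2+y) * Real.log (2+y) - 2*y))
        (c^2 * (Real.log (2+x) + (2+x) * (1/(2+x)) - 2)) x := by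
      have h1 : HasDerivAt (fun y : ℝ => (2+y) * Real.log (2+y))
          (1 * Real.log (2+x) + (2+x) * (1/(2+x))) x := haux.mul hL'
      have h2 : HasDerivAt (fun y : ℝ => 2*y) 2 x := by
        simpa using (hasDerivAt_id x).const_mul 2
      have := (h1.sub h2).const_mul (c^2)
      refine this.congr_deriv ?_
      ring
    have hden : HasDerivAt (fun y : ℝ => (2+y) * (Real.log (2+y))^3)
        (1 * (Real.log (2+x))^3 + (2+x) * (3 * (Real.log (2+x))^2 * (1/(2+x)))) x := by
      have h3 : HasDerivAt (fun y : ℝ => (Real.log (2+y))^3)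
          (3 * (Real.log (2+x))^2 * (1/(2+x))) x := by
        have := hL'.pow 3
        refine this.congr_deriv ?_
        norm_num
      exact haux.mul h3
    have := hnum.div hden (by positivity)
    rw [hg1def]
    refine this.congr_deriv ?_
    rw [hg2def]
    field_simp
    ring
  -- continuity
  have hcont : ContinuousOn g (Set.Ici 0) := by
    rw [hg]
    apply ContinuousOn.div
    · exact (continuous_const.mul continuous_id).continuousOn
    · exact ((Real.continuousOn_log.comp (continuous_const.add continuous_id).continuousOn
        (fun x hx => by simp at hx ⊢; intro h; linarith)).pow 2)
    · intro x hx
      simp only [Set.mem_Ici] at hx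
      have : 0 < Real.log (2+x) := Real.log_pos (by linarith)
      positivity
  -- sign
  have hsign : ∀ x ∈ interior (Set.Ici (0:ℝ)), g2 x ≤ 0 := by
    intro x hx
    rw [interior_Ici] at hx
    have hx : (0:ℝ) < x := hx
    have hLp := hLpos x hx
    have hkey := key_ineq (2+x) (by linarith)
    have hnum : 6*x - (2*x+8) * Real.log (2+x) ≤ 0 := by nlinarith
    rw [hg2def]
    have hden : (0:ℝ) < (2+x)^2 * (Real.log (2+x))^4 := by positivity
    apply div_nonpos_of_nonpos_of_nonneg
    · nlinarith [sq_nonneg c]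
    · positivity
  exact concaveOn_of_hasDerivWithinAt2_nonpos (convex_Ici 0) hcont
    (fun x hx => (hd1 x hx).hasDerivWithinAt)
    (fun x hx => (hd2 x hx).hasDerivWithinAt)
    hsign
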